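/- arXiv:1004.4347 — 2 statements merged into one kernel-verified Lean document; each statement's English description precedes it below -/
import Mathlib

section
/- Let f assign a nonnegative real weight to each interval [a,b) with a < b, and define the joint weight of a segmentation m as W(m) = ∏_{r ∈ m} f(r). Let Z_K = ∑_{m ∈ M_K} W(m) where M_K is the set of segmentations of {1,...,n} into K segments, assumed positive. Define P(m|K) = W(m)/Z_K and B_{K,k}(t) = ∑_{m : τ_k(m) = t} P(m|K). Then B_{K,k}(t) = F_{1,t}(k-1) · F_{t,n+1}(K-k+1) / Z_K, where F_{a,b}(j) = ∑_{m ∈ M_j([a,b))} ∏_{r ∈ m} f(r) (with F_{a,b}(0) = 1 if a = b and 0 otherwise, and F_{a,b}(j) = 0 if a > b). -/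
/-- Segmentations of `[a, b)` into `k` contiguous segments, as strictly increasing
sequences `a = t 0 < ... < t k = b` with values in `{0, ..., n+1}`. -/
def Seg (n k a b : ℕ) : Finset (Fin (k + 1) → Fin (n + 2)) :=
  Finset.univ.filter fun t =>
    (∀ l : Fin k, t l.castSucc < t l.succ) ∧ (t 0 : ℕ) = a ∧ (t (Fin.last k) : ℕ) = b

/-- Multiplicative weight of a segmentation: product of `f` over its segments. -/
def W (n k : ℕ) (f : ℕ → ℕ → ℝ) (t : Fin (k + 1) → Fin (n + 2)) : ℝ :=
  ∏ l : Fin k, f (t l.castSucc) (t l.succ)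

theorem split (n k j a b t : ℕ) (f : ℕ → ℕ → ℝ) :
    (∑ m ∈ (Seg n (k + j) a b).filter
        (fun m => (m (⟨k, by omega⟩ : Fin (k + j + 1)) : ℕ) = t), W n (k + j) f m)
    = (∑ m ∈ Seg n k a t, W n k f m) * (∑ m ∈ Seg n j t b, W n j f m) := by
  rw [Finset.sum_mul_sum, ← Finset.sum_product']
  refine Finset.sum_nbij'
    (i := fun m => (fun i : Fin (k+1) => m ⟨i, by omega⟩, fun i : Fin (j+1) => m ⟨k + i, by omega⟩))
    (j := fun p => fun i : Fin (k+j+1) =>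
      if h : (i : ℕ) ≤ k then p.1 ⟨i, by omega⟩ else p.2 ⟨(i : ℕ) - k, by omega⟩)
    ?_ ?_ ?_ ?_ ?_
  · intro m hm
    simp only [Seg, Finset.mem_filter, Finset.mem_univ, true_and, Finset.mem_product] at hm ⊢
    obtain ⟨⟨hmono, h0, hlast⟩, ht⟩ := hm
    have key : ∀ (u v : ℕ) (hu : u < k+j+1) (hv : v < k+j+1), v = u + 1 →
        m ⟨u, hu⟩ < m ⟨v, hv⟩ := by
      rintro u v hu hv rfl
      exact hmono ⟨u, by omega⟩
    refine ⟨⟨fun l => key _ _ _ _ (by simp), ?_, ?_⟩,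
            fun l => key _ _ _ _ (by simp; omega), ?_, ?_⟩
    · convert h0 using 3
      exact Fin.ext (by simp)
    · convert ht using 3
      exact Fin.ext (by simp)
    · convert ht using 3
      exact Fin.ext (by simp)
    · convert hlast using 3
      exact Fin.ext (by simp)
  · intro p hp
    simp only [Seg, Finset.mem_filter, Finset.mem_univ, true_and, Finset.mem_product] at hp ⊢
    obtain ⟨⟨m1, p0, pl⟩, m2, q0, ql⟩ := hp
    have m2' : ∀ (u v : ℕ) (hu : u < j+1) (hv : v < j+1), v = u + 1 →
        p.2 ⟨u, hu⟩ < p.2 ⟨v, hv⟩ := by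
      rintro u v hu hv rfl; exact m2 ⟨u, by omega⟩
    refine ⟨⟨fun l => ?_, ?_, ?_⟩, ?_⟩
    · simp only [Fin.coe_castSucc, Fin.val_succ]
      split_ifs with h1 h2 h2
      · exact m1 ⟨l, by omega⟩
      · -- l = k boundary
        have hl : (l : ℕ) = k := by omega
        rw [Fin.lt_def]
        have e1 : (p.1 ⟨(l : ℕ), by omega⟩ : ℕ) = t := by
          rw [show (⟨(l:ℕ), by omega⟩ : Fin (k+1)) = Fin.last k from Fin.ext (by simp [hl])]
          exact pl
        have e2 : (p.2 0 : ℕ) < (p.2 ⟨(l:ℕ)+1-k, by omega⟩ : ℕ) := by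
          have := m2' 0 ((l:ℕ)+1-k) (by omega) (by omega) (by omega)
          rw [Fin.lt_def] at this
          convert this using 3
          exact Fin.ext (by simp)
        omega
      · omega
      · have := m2' ((l:ℕ)-k) ((l:ℕ)+1-k) (by omega) (by omega) (by omega)
        exact this
    · simp only [Fin.val_zero, Nat.zero_le, dif_pos]
      convert p0 using 3
      exact (dif_pos (Nat.zero_le k)).trans (congrArg p.1 (Fin.ext (by simp)))
    · have : ¬ (↑(Fin.last (k+j)) ≤ k) ∨ j = 0 := by simp [Fin.last]; omega
      rcases this with h | h
      · rw [dif_neg h]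
        convert ql using 3
        ext; simp [Fin.last]
      · subst h
        have hb : t = b := by rw [← q0, ← ql]; congr 1
        simp only [Fin.last, Nat.add_zero, le_refl, dif_pos]
        rw [hb] at pl
        convert pl using 3
        rfl
    · rw [dif_pos le_rfl]
      convert pl using 3
      rfl
  · intro m hm
    funext i
    dsimp only
    split_ifs with h
    · congr 1
    · congr 1; exact Fin.ext (by simp; omega)
  · intro p hp
    simp only [Seg, Finset.mem_filter, Finset.mem_univ, true_and, Finset.mem_product] at hp
    obtain ⟨⟨m1, p0, pl⟩, m2, q0, ql⟩ := hp
    refine Prod.ext ?_ ?_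
    case _ =>
      funext i
      dsimp only
      rw [dif_pos (by omega : (i:ℕ) ≤ k)]
    case _ =>
      funext i
      dsimp only
      by_cases h : (i : ℕ) = 0
      · rw [dif_pos (by omega : k + (i:ℕ) ≤ k)]
        have h2 : i = (0 : Fin (j+1)) := Fin.ext (by simp only [Fin.val_zero]; exact h)
        conv_rhs => rw [h2]
        apply Fin.ext
        rw [q0]
        rw [show (⟨k + (i:ℕ), by omega⟩ : Fin (k+1)) = Fin.last k from Fin.ext (by simp [h])]
        exact pl
      · rw [dif_neg (by omega : ¬ (k + (i:ℕ) ≤ k))]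
        exact Fin.ext (by simp)
  · intro m hm
    simp only [W]
    rw [Fin.prod_univ_add]
    congr 1

/-- For the distribution P(m|K) = W(m)/Z_K on segmentations of
{1,...,n} into K segments, the posterior probability that the k-th change-point
is at t equals F_{1,t}(k-1)·F_{t,n+1}(K-k+1)/Z_K, where F_{a,b}(j) is the
total weight of segmentations of [a,b) into j segments. -/
theorem changepoint_posterior_factorization (n K k t : ℕ)
    (hk1 : 1 ≤ k) (hk2 : k ≤ K)
    (f : ℕ → ℕ → ℝ) (hf : ∀ a b, 0 ≤ f a b)
    (Z : ℝ) (hZdef : Z = ∑ m ∈ Seg n K 1 (n + 1), W n K f m) (hZ : 0 < Z)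
    (B : ℝ)
    (hB : B = (∑ m ∈ (Seg n K 1 (n + 1)).filter
        (fun m => (m (⟨k - 1, by omega⟩ : Fin (K + 1)) : ℕ) = t), W n K f m) / Z) :
    B = (∑ m ∈ Seg n (k - 1) 1 t, W n (k - 1) f m)
          * (∑ m ∈ Seg n (K - k + 1) t (n + 1), W n (K - k + 1) f m) / Z := by
  subst hB
  congr 1
  obtain ⟨j, rfl⟩ : ∃ j, K = (k - 1) + j := ⟨K - (k - 1), by omega⟩
  have hj : (k - 1) + j - k + 1 = j := by omega
  rw [hj]
  exact split n (k-1) j 1 (n+1) t f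
end

section
/- Let f be a nonnegative weight on intervals with Z_K = ∑_{m ∈ M_K} ∏_{r ∈ m} f(r) > 0 and P(m|K) = ∏_{r ∈ m} f(r) / Z_K. Define S_{K,k}(t_1,t_2) = P({m ∈ M_K : k-th segment of m is [t_1,t_2)} | K). Then S_{K,k}(t_1,t_2) = F_{1,t_1}(k-1) · f([t_1,t_2)) · F_{t_2,n+1}(K-k) / Z_K, where F_{a,b}(j) = ∑_{m ∈ M_j([a,b))} ∏_{r ∈ m} f(r) with conventions F_{a,a}(0) = 1 and F_{a,b}(j) = 0 if j = 0, a ≠ b or if a > b. -/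
lemma mem_Seg {n k a b : ℕ} {t : Fin (k+1) → Fin (n+2)} :
    t ∈ Seg n k a b ↔ (∀ l : Fin k, t l.castSucc < t l.succ) ∧ (t 0 : ℕ) = a ∧ (t (Fin.last k) : ℕ) = b := by
  simp [Seg]

def segL (n K k : ℕ) (hk2 : k ≤ K) (m : Fin (K+1) → Fin (n+2)) : Fin (k-1+1) → Fin (n+2) :=
  fun i => m ⟨(i:ℕ), by omega⟩

def segR (n K k : ℕ) (hk2 : k ≤ K) (m : Fin (K+1) → Fin (n+2)) : Fin (K-k+1) → Fin (n+2) :=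
  fun j => m ⟨k + (j:ℕ), by omega⟩

def segGlue (n K k : ℕ) (hk1 : 1 ≤ k) (hk2 : k ≤ K)
    (u : Fin (k-1+1) → Fin (n+2)) (v : Fin (K-k+1) → Fin (n+2)) : Fin (K+1) → Fin (n+2) :=
  fun i => if h : (i:ℕ) < k then u ⟨(i:ℕ), by omega⟩ else v ⟨(i:ℕ) - k, by omega⟩

lemma segGlue_lt {n K k : ℕ} (hk1 : 1 ≤ k) (hk2 : k ≤ K)
    (u : Fin (k-1+1) → Fin (n+2)) (v : Fin (K-k+1) → Fin (n+2)) (i : Fin (K+1))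
    (h : (i:ℕ) < k) : segGlue n K k hk1 hk2 u v i = u ⟨(i:ℕ), by omega⟩ := by
  simp only [segGlue, dif_pos h]

lemma segGlue_ge {n K k : ℕ} (hk1 : 1 ≤ k) (hk2 : k ≤ K)
    (u : Fin (k-1+1) → Fin (n+2)) (v : Fin (K-k+1) → Fin (n+2)) (i : Fin (K+1))
    (h : ¬ (i:ℕ) < k) : segGlue n K k hk1 hk2 u v i = v ⟨(i:ℕ) - k, by omega⟩ := by
  simp only [segGlue, dif_neg h]

lemma congr_f {n : ℕ} (f : ℕ → ℕ → ℝ) {a b c d : Fin (n+2)} (h1 : a = c) (h2 : b = d) :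
    f a b = f c d := by rw [h1, h2]

lemma segL_mem {n K k t₁ : ℕ} (hk1 : 1 ≤ k) (hk2 : k ≤ K) (m : Fin (K+1) → Fin (n+2))
    (hmono : ∀ l : Fin K, m l.castSucc < m l.succ) (h0 : (m 0 : ℕ) = 1)
    (h1 : ((m ⟨k-1, by omega⟩ : Fin (n+2)) : ℕ) = t₁) :
    segL n K k hk2 m ∈ Seg n (k-1) 1 t₁ := by
  rw [mem_Seg]
  refine ⟨fun l => ?_, ?_, ?_⟩
  · have := hmono ⟨(l:ℕ), by omega⟩
    simp only [segL]
    convert this using 2 <;> apply Fin.ext <;> simp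
  · simp only [segL]
    convert h0 using 3
    apply Fin.ext; simp
  · simp only [segL]
    convert h1 using 3
    apply Fin.ext; simp

lemma segR_mem {n K k t₂ : ℕ} (hk1 : 1 ≤ k) (hk2 : k ≤ K) (m : Fin (K+1) → Fin (n+2))
    (hmono : ∀ l : Fin K, m l.castSucc < m l.succ) (hlast : (m (Fin.last K) : ℕ) = n+1)
    (h2 : ((m ⟨k, by omega⟩ : Fin (n+2)) : ℕ) = t₂) :
    segR n K k hk2 m ∈ Seg n (K-k) t₂ (n+1) := by
  rw [mem_Seg]
  refine ⟨fun l => ?_, ?_, ?_⟩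
  · have := hmono ⟨k + (l:ℕ), by omega⟩
    simp only [segR]
    convert this using 2 <;> apply Fin.ext <;> simp <;> omega
  · simp only [segR]
    convert h2 using 3
    apply Fin.ext; simp
  · simp only [segR]
    convert hlast using 3
    apply Fin.ext
    simp [Fin.last]
    omega

lemma segGlue_mem {n K k t₁ t₂ : ℕ} (hk1 : 1 ≤ k) (hk2 : k ≤ K) (ht : t₁ < t₂)
    (u : Fin (k-1+1) → Fin (n+2)) (v : Fin (K-k+1) → Fin (n+2))
    (hu : u ∈ Seg n (k-1) 1 t₁) (hv : v ∈ Seg n (K-k) t₂ (n+1)) :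
    segGlue n K k hk1 hk2 u v ∈ Seg n K 1 (n+1) ∧
      ((segGlue n K k hk1 hk2 u v ⟨k-1, by omega⟩ : Fin (n+2)) : ℕ) = t₁ ∧
      ((segGlue n K k hk1 hk2 u v ⟨k, by omega⟩ : Fin (n+2)) : ℕ) = t₂ := by
  rw [mem_Seg] at hu hv
  obtain ⟨umono, u0, ulast⟩ := hu
  obtain ⟨vmono, v0, vlast⟩ := hv
  have hu1 : ∀ (h : k-1 < k-1+1), ((u ⟨k-1, h⟩ : Fin (n+2)) : ℕ) = t₁ := fun h => ulast
  have hv0 : ∀ (h : 0 < K-k+1), ((v ⟨0, h⟩ : Fin (n+2)) : ℕ) = t₂ := fun h => v0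
  have hmem : segGlue n K k hk1 hk2 u v ∈ Seg n K 1 (n+1) := by
    refine mem_Seg.2 ⟨fun l => ?_, ?_, ?_⟩
    · rcases lt_trichotomy ((l:ℕ)+1) k with h | h | h
      · rw [segGlue_lt hk1 hk2 u v l.castSucc (by simp only [Fin.coe_castSucc]; omega),
            segGlue_lt hk1 hk2 u v l.succ (by simp only [Fin.val_succ]; omega)]
        have := umono ⟨(l:ℕ), by omega⟩
        convert this using 2 <;> apply Fin.ext <;> simp
      · rw [segGlue_lt hk1 hk2 u v l.castSucc (by simp only [Fin.coe_castSucc]; omega),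
            segGlue_ge hk1 hk2 u v l.succ (by simp only [Fin.val_succ]; omega)]
        have hlt : ∀ (hx : (l:ℕ) < k-1+1) (hy : (l:ℕ)+1-k < K-k+1),
            (u ⟨(l:ℕ), hx⟩ : Fin (n+2)) < v ⟨(l:ℕ)+1-k, hy⟩ := by
          intro hx hy
          have e1 : ((u ⟨(l:ℕ), hx⟩ : Fin (n+2)) : ℕ) = t₁ := by
            convert hu1 (by omega) using 3
            all_goals first
              | omega
              | (apply Fin.ext; simp; try omega)
          have e2 : ((v ⟨(l:ℕ)+1-k, hy⟩ : Fin (n+2)) : ℕ) = t₂ := by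
            convert hv0 (by omega) using 3
            all_goals first
              | omega
              | (apply Fin.ext; simp; try omega)
          rw [Fin.lt_iff_val_lt_val, e1, e2]
          exact ht
        have := hlt (by omega) (by omega)
        convert this using 2 <;> apply Fin.ext <;> simp
      · rw [segGlue_ge hk1 hk2 u v l.castSucc (by simp only [Fin.coe_castSucc]; omega),
            segGlue_ge hk1 hk2 u v l.succ (by simp only [Fin.val_succ]; omega)]
        have := vmono ⟨(l:ℕ) - k, by omega⟩
        convert this using 2 <;> apply Fin.ext <;> simp <;> omega
    · rw [segGlue_lt hk1 hk2 u v 0 (by simp only [Fin.val_zero]; omega)]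
      convert u0 using 3
      apply Fin.ext; simp
    · rw [segGlue_ge hk1 hk2 u v (Fin.last K) (by simp only [Fin.val_last]; omega)]
      convert vlast using 3
      all_goals first
        | omega
        | (apply Fin.ext; simp [Fin.last]; try omega)
  have hval1 : ((segGlue n K k hk1 hk2 u v ⟨k-1, by omega⟩ : Fin (n+2)) : ℕ) = t₁ := by
    rw [segGlue_lt hk1 hk2 u v ⟨k-1, by omega⟩ (by simp only [Fin.val_mk]; omega)]
    exact hu1 _
  have hval2 : ((segGlue n K k hk1 hk2 u v ⟨k, by omega⟩ : Fin (n+2)) : ℕ) = t₂ := by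
    rw [segGlue_ge hk1 hk2 u v ⟨k, by omega⟩ (by simp only [Fin.val_mk]; omega)]
    convert hv0 (by omega : (0:ℕ) < K-k+1) using 3
    all_goals first
      | omega
      | (apply Fin.ext; simp; try omega)
  exact ⟨hmem, hval1, hval2⟩

lemma segGlue_LR {n K k : ℕ} (hk1 : 1 ≤ k) (hk2 : k ≤ K) (m : Fin (K+1) → Fin (n+2)) :
    segGlue n K k hk1 hk2 (segL n K k hk2 m) (segR n K k hk2 m) = m := by
  funext i
  by_cases h : (i:ℕ) < k
  · rw [segGlue_lt hk1 hk2 _ _ i h]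
    simp only [segL]
  · rw [segGlue_ge hk1 hk2 _ _ i h]
    simp only [segR]
    congr 1
    apply Fin.ext; simp; omega

lemma segL_glue {n K k : ℕ} (hk1 : 1 ≤ k) (hk2 : k ≤ K)
    (u : Fin (k-1+1) → Fin (n+2)) (v : Fin (K-k+1) → Fin (n+2)) :
    segL n K k hk2 (segGlue n K k hk1 hk2 u v) = u := by
  funext i
  simp only [segL]
  rw [segGlue_lt hk1 hk2 u v ⟨(i:ℕ), by omega⟩ (by simp only [Fin.val_mk]; omega)]

lemma segR_glue {n K k : ℕ} (hk1 : 1 ≤ k) (hk2 : k ≤ K)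
    (u : Fin (k-1+1) → Fin (n+2)) (v : Fin (K-k+1) → Fin (n+2)) :
    segR n K k hk2 (segGlue n K k hk1 hk2 u v) = v := by
  funext j
  simp only [segR]
  rw [segGlue_ge hk1 hk2 u v ⟨k + (j:ℕ), by omega⟩ (by simp only [Fin.val_mk]; omega)]
  congr 1
  apply Fin.ext; simp

lemma prod_range_split (K k : ℕ) (hk1 : 1 ≤ k) (hk2 : k ≤ K) (g : ℕ → ℝ) :
    ∏ x ∈ Finset.range K, g x
      = (∏ x ∈ Finset.range (k-1), g x) * (g (k-1) * ∏ x ∈ Finset.range (K-k), g (k+x)) := by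
  conv_lhs => rw [show K = (k-1)+(1+(K-k)) by omega]
  rw [Finset.prod_range_add, Finset.prod_range_add, Finset.prod_range_one]
  congr 1
  congr 1
  apply Finset.prod_congr rfl
  intro x _
  congr 1
  omega

lemma W_eq_range (n k : ℕ) (f : ℕ → ℕ → ℝ) (t : Fin (k+1) → Fin (n+2)) :
    W n k f t = ∏ x ∈ Finset.range k, f (t ⟨min x k, by omega⟩) (t ⟨min (x+1) k, by omega⟩) := by
  rw [W, ← Fin.prod_univ_eq_prod_range (fun x => f (t ⟨min x k, by omega⟩) (t ⟨min (x+1) k, by omega⟩)) k]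
  apply Finset.prod_congr rfl
  intro l _
  exact congr_f f (congrArg t (Fin.ext (by have := l.isLt; simp only [Fin.val_mk, Fin.coe_castSucc, Fin.val_succ]; omega))) (congrArg t (Fin.ext (by have := l.isLt; simp only [Fin.val_mk, Fin.coe_castSucc, Fin.val_succ]; omega)))

lemma W_split {n K k : ℕ} (hk1 : 1 ≤ k) (hk2 : k ≤ K) (f : ℕ → ℕ → ℝ)
    (m : Fin (K+1) → Fin (n+2)) :
    W n K f m = W n (k-1) f (segL n K k hk2 m)
      * (f (m ⟨k-1, by omega⟩) (m ⟨k, by omega⟩) * W n (K-k) f (segR n K k hk2 m)) := by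
  rw [W_eq_range n K f m, W_eq_range n (k-1) f (segL n K k hk2 m),
    W_eq_range n (K-k) f (segR n K k hk2 m), prod_range_split K k hk1 hk2]
  congr 1
  · apply Finset.prod_congr rfl
    intro x hx
    rw [Finset.mem_range] at hx
    simp only [segL]
    exact congr_f f (congrArg m (Fin.ext (by simp only [Fin.val_mk]; omega))) (congrArg m (Fin.ext (by simp only [Fin.val_mk]; omega)))
  congr 1
  · exact congr_f f (congrArg m (Fin.ext (by simp only [Fin.val_mk]; omega))) (congrArg m (Fin.ext (by simp only [Fin.val_mk]; omega)))
  · apply Finset.prod_congr rfl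
    intro x hx
    rw [Finset.mem_range] at hx
    simp only [segR]
    exact congr_f f (congrArg m (Fin.ext (by simp only [Fin.val_mk]; omega))) (congrArg m (Fin.ext (by simp only [Fin.val_mk]; omega)))

lemma key (n K k t₁ t₂ : ℕ)
    (hk1 : 1 ≤ k) (hk2 : k ≤ K) (ht : t₁ < t₂)
    (f : ℕ → ℕ → ℝ) :
    (∑ m ∈ (Seg n K 1 (n + 1)).filter
        (fun m => (m (⟨k - 1, by omega⟩ : Fin (K + 1)) : ℕ) = t₁ ∧
          (m (⟨k, by omega⟩ : Fin (K + 1)) : ℕ) = t₂), W n K f m)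
    = (∑ m ∈ Seg n (k - 1) 1 t₁, W n (k - 1) f m) * f t₁ t₂
        * (∑ m ∈ Seg n (K - k) t₂ (n + 1), W n (K - k) f m) := by
  classical
  have main : (∑ m ∈ (Seg n K 1 (n + 1)).filter
        (fun m => (m (⟨k - 1, by omega⟩ : Fin (K + 1)) : ℕ) = t₁ ∧
          (m (⟨k, by omega⟩ : Fin (K + 1)) : ℕ) = t₂), W n K f m)
      = ∑ p ∈ (Seg n (k-1) 1 t₁) ×ˢ (Seg n (K-k) t₂ (n+1)),
          W n (k-1) f p.1 * (f t₁ t₂ * W n (K-k) f p.2) := by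
    apply Finset.sum_nbij'
      (i := fun m => (segL n K k hk2 m, segR n K k hk2 m))
      (j := fun p => segGlue n K k hk1 hk2 p.1 p.2)
    · intro m hm
      rw [Finset.mem_filter, mem_Seg] at hm
      obtain ⟨⟨hmono, h0, hlast⟩, h1, h2⟩ := hm
      rw [Finset.mem_product]
      exact ⟨segL_mem hk1 hk2 m hmono h0 h1, segR_mem hk1 hk2 m hmono hlast h2⟩
    · intro p hp
      rw [Finset.mem_product] at hp
      have := segGlue_mem hk1 hk2 ht p.1 p.2 hp.1 hp.2
      rw [Finset.mem_filter]
      exact ⟨this.1, this.2.1, this.2.2⟩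
    · intro m hm
      exact segGlue_LR hk1 hk2 m
    · intro p hp
      exact Prod.ext (segL_glue hk1 hk2 p.1 p.2) (segR_glue hk1 hk2 p.1 p.2)
    · intro m hm
      rw [Finset.mem_filter, mem_Seg] at hm
      obtain ⟨⟨hmono, h0, hlast⟩, h1, h2⟩ := hm
      rw [W_split hk1 hk2 f m, h1, h2]
  rw [main, Finset.sum_product, Finset.sum_mul, Finset.sum_mul]
  apply Finset.sum_congr rfl
  intro u hu
  rw [Finset.mul_sum]
  apply Finset.sum_congr rfl
  intro v hv
  ring


/-- The posterior probability that the k-th segment is exactly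
[t₁,t₂) equals F_{1,t₁}(k-1)·f([t₁,t₂))·F_{t₂,n+1}(K-k)/Z_K. -/
theorem segment_posterior_factorization (n K k t₁ t₂ : ℕ)
    (hk1 : 1 ≤ k) (hk2 : k ≤ K) (ht1 : 1 ≤ t₁) (ht : t₁ < t₂) (ht2 : t₂ ≤ n + 1)
    (f : ℕ → ℕ → ℝ) (hf : ∀ a b, 0 ≤ f a b)
    (Z : ℝ) (hZdef : Z = ∑ m ∈ Seg n K 1 (n + 1), W n K f m) (hZ : 0 < Z)
    (S : ℝ)
    (hS : S = (∑ m ∈ (Seg n K 1 (n + 1)).filter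
        (fun m => (m (⟨k - 1, by omega⟩ : Fin (K + 1)) : ℕ) = t₁ ∧
          (m (⟨k, by omega⟩ : Fin (K + 1)) : ℕ) = t₂), W n K f m) / Z) :
    S = (∑ m ∈ Seg n (k - 1) 1 t₁, W n (k - 1) f m) * f t₁ t₂
          * (∑ m ∈ Seg n (K - k) t₂ (n + 1), W n (K - k) f m) / Z := by
  rw [hS]
  congr 1
  exact key n K k t₁ t₂ hk1 hk2 ht f
end
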